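/- Let G = ([n],E) with feasible cover partition 𝒯, and let 𝒮_𝒯 ⊆ ℝ^{n+2|𝒯|+2|𝒯|n} consist of all (y, q, q̄, v, v̄) with y ∈ [0,1]^n and, for each T ∈ 𝒯: v̄_{T,i} = 0 ∀ i ∈ T, v_{T,j} = 0 ∀ j ∈ δ(T), 0 ≤ v_T ≤ q_T·1, 0 ≤ v̄_T ≤ q̄_T·1, q_T + q̄_T = 1, q_T, q̄_T ≥ 0, v_T = q_T·y, v̄_T = q̄_T·y. Then every extreme point of 𝒮_𝒯 has all coordinates in {0,1}; in particular conv(𝒮_𝒯) is a polytope. -/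

import Mathlib

/-- The ambient space of points `(y, q, q̄, v, v̄)`. -/
abbrev Pt (n : ℕ) (𝒯 : Finset (Finset (Fin n))) : Type :=
  (Fin n → ℝ) × ({T // T ∈ 𝒯} → ℝ) × ({T // T ∈ 𝒯} → ℝ) ×
    ({T // T ∈ 𝒯} → Fin n → ℝ) × ({T // T ∈ 𝒯} → Fin n → ℝ)

/-- The bilinear set `𝒮_𝒯`; for `w = (y, q, q̄, v, v̄)` we write `w.1 = y`,
`w.2.1 = q`, `w.2.2.1 = q̄`, `w.2.2.2.1 = v`, `w.2.2.2.2 = v̄`. -/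
def STset {n : ℕ} (G : SimpleGraph (Fin n)) (𝒯 : Finset (Finset (Fin n))) :
    Set (Pt n 𝒯) :=
  {w | (∀ i, 0 ≤ w.1 i ∧ w.1 i ≤ 1) ∧
    ∀ T : {T // T ∈ 𝒯},
      (∀ i ∈ T.1, w.2.2.2.2 T i = 0) ∧
      (∀ j : Fin n, (∃ i ∈ T.1, G.Adj i j) → w.2.2.2.1 T j = 0) ∧
      (∀ j, 0 ≤ w.2.2.2.1 T j ∧ w.2.2.2.1 T j ≤ w.2.1 T) ∧
      (∀ j, 0 ≤ w.2.2.2.2 T j ∧ w.2.2.2.2 T j ≤ w.2.2.1 T) ∧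
      (w.2.1 T + w.2.2.1 T = 1) ∧ 0 ≤ w.2.1 T ∧ 0 ≤ w.2.2.1 T ∧
      (∀ j, w.2.2.2.1 T j = w.2.1 T * w.1 j) ∧
      (∀ j, w.2.2.2.2 T j = w.2.2.1 T * w.1 j)}

namespace StmtAux

open Classical

variable {n : ℕ} {G : SimpleGraph (Fin n)} {𝒯 : Finset (Finset (Fin n))}

/-- The point obtained by rounding `y ℓ` to `b` (and the products with it). -/
noncomputable def ptY (w : Pt n 𝒯) (ℓ : Fin n) (b : ℝ) : Pt n 𝒯 :=
  (Function.update w.1 ℓ b, w.2.1, w.2.2.1,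
   fun T => Function.update (w.2.2.2.1 T) ℓ (w.2.1 T * b),
   fun T => Function.update (w.2.2.2.2 T) ℓ (w.2.2.1 T * b))

/-- The point obtained by rounding `q T₀` to `b` (and `q̄ T₀` to `1 - b`). -/
noncomputable def ptQ (w : Pt n 𝒯) (T₀ : {T // T ∈ 𝒯}) (b : ℝ) : Pt n 𝒯 :=
  (w.1, Function.update w.2.1 T₀ b, Function.update w.2.2.1 T₀ (1 - b),
   Function.update w.2.2.2.1 T₀ (fun j => b * w.1 j),
   Function.update w.2.2.2.2 T₀ (fun j => (1 - b) * w.1 j))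

lemma memY {w : Pt n 𝒯} (hw : w ∈ STset G 𝒯) (ℓ : Fin n) (hpos : 0 < w.1 ℓ)
    {b : ℝ} (hb0 : 0 ≤ b) (hb1 : b ≤ 1) : ptY w ℓ b ∈ STset G 𝒯 := by
  obtain ⟨hy, hT⟩ := hw
  constructor
  · intro i
    by_cases h : i = ℓ
    · subst h; simp only [ptY, Function.update_self]; exact ⟨hb0, hb1⟩
    · simpa [ptY, Function.update_of_ne h] using hy i
  · intro T
    obtain ⟨h1, h2, h3, h4, h5, h6, h7, h8, h9⟩ := hT T
    refine ⟨?_, ?_, ?_, ?_, h5, h6, h7, ?_, ?_⟩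
    · intro i hi
      by_cases h : i = ℓ
      · subst h
        have hz : w.2.2.1 T * w.1 i = 0 := by rw [← h9 i, h1 i hi]
        have hq : w.2.2.1 T = 0 := by
          rcases mul_eq_zero.1 hz with h | h
          · exact h
          · exact absurd h (ne_of_gt hpos)
        simp only [ptY, Function.update_self, hq, zero_mul]
      · simpa [ptY, Function.update_of_ne h] using h1 i hi
    · intro j hj
      by_cases h : j = ℓ
      · subst h
        have hz : w.2.1 T * w.1 j = 0 := by rw [← h8 j, h2 j hj]
        have hq : w.2.1 T = 0 := by
          rcases mul_eq_zero.1 hz with h | h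
          · exact h
          · exact absurd h (ne_of_gt hpos)
        simp only [ptY, Function.update_self, hq, zero_mul]
      · simpa [ptY, Function.update_of_ne h] using h2 j hj
    · intro j
      by_cases h : j = ℓ
      · subst h
        simp only [ptY, Function.update_self]
        exact ⟨mul_nonneg h6 hb0, mul_le_of_le_one_right h6 hb1⟩
      · simpa [ptY, Function.update_of_ne h] using h3 j
    · intro j
      by_cases h : j = ℓ
      · subst h
        simp only [ptY, Function.update_self]
        exact ⟨mul_nonneg h7 hb0, mul_le_of_le_one_right h7 hb1⟩
      · simpa [ptY, Function.update_of_ne h] using h4 j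
    · intro j
      by_cases h : j = ℓ
      · subst h; simp only [ptY, Function.update_self]
      · simp only [ptY, Function.update_of_ne h]; exact h8 j
    · intro j
      by_cases h : j = ℓ
      · subst h; simp only [ptY, Function.update_self]
      · simp only [ptY, Function.update_of_ne h]; exact h9 j

lemma combY {w : Pt n 𝒯} (hw : w ∈ STset G 𝒯) (ℓ : Fin n) :
    w.1 ℓ • ptY w ℓ 1 + (1 - w.1 ℓ) • ptY w ℓ 0 = w := by
  obtain ⟨hy, hT⟩ := hw
  refine Prod.ext ?_ (Prod.ext ?_ (Prod.ext ?_ (Prod.ext ?_ ?_)))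
  · funext i
    by_cases h : i = ℓ
    · subst h; simp [ptY]
    · simp only [ptY, Pi.add_apply, Pi.smul_apply, Prod.fst_add, Prod.smul_fst,
        Function.update_of_ne h, smul_eq_mul]
      ring
  · funext T
    show w.1 ℓ * w.2.1 T + (1 - w.1 ℓ) * w.2.1 T = w.2.1 T
    ring
  · funext T
    show w.1 ℓ * w.2.2.1 T + (1 - w.1 ℓ) * w.2.2.1 T = w.2.2.1 T
    ring
  · funext T j
    by_cases h : j = ℓ
    · subst h
      show w.1 j * Function.update (w.2.2.2.1 T) j (w.2.1 T * 1) j +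
          (1 - w.1 j) * Function.update (w.2.2.2.1 T) j (w.2.1 T * 0) j = w.2.2.2.1 T j
      rw [Function.update_self, Function.update_self, (hT T).2.2.2.2.2.2.2.1 j]
      ring
    · show w.1 ℓ * Function.update (w.2.2.2.1 T) ℓ (w.2.1 T * 1) j +
          (1 - w.1 ℓ) * Function.update (w.2.2.2.1 T) ℓ (w.2.1 T * 0) j = w.2.2.2.1 T j
      rw [Function.update_of_ne h, Function.update_of_ne h]
      ring
  · funext T j
    by_cases h : j = ℓ
    · subst h
      show w.1 j * Function.update (w.2.2.2.2 T) j (w.2.2.1 T * 1) j +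
          (1 - w.1 j) * Function.update (w.2.2.2.2 T) j (w.2.2.1 T * 0) j = w.2.2.2.2 T j
      rw [Function.update_self, Function.update_self, (hT T).2.2.2.2.2.2.2.2 j]
      ring
    · show w.1 ℓ * Function.update (w.2.2.2.2 T) ℓ (w.2.2.1 T * 1) j +
          (1 - w.1 ℓ) * Function.update (w.2.2.2.2 T) ℓ (w.2.2.1 T * 0) j = w.2.2.2.2 T j
      rw [Function.update_of_ne h, Function.update_of_ne h]
      ring

lemma memQ {w : Pt n 𝒯} (hw : w ∈ STset G 𝒯) (T₀ : {T // T ∈ 𝒯})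
    (hqpos : 0 < w.2.1 T₀) (hqbpos : 0 < w.2.2.1 T₀)
    {b : ℝ} (hb0 : 0 ≤ b) (hb1 : b ≤ 1) : ptQ w T₀ b ∈ STset G 𝒯 := by
  obtain ⟨hy, hT⟩ := hw
  refine ⟨hy, ?_⟩
  intro T
  obtain ⟨h1, h2, h3, h4, h5, h6, h7, h8, h9⟩ := hT T
  by_cases h : T = T₀
  · subst h
    refine ⟨?_, ?_, ?_, ?_, ?_, ?_, ?_, ?_, ?_⟩
    · intro i hi
      have hz : w.2.2.1 T * w.1 i = 0 := by rw [← h9 i, h1 i hi]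
      have hyi : w.1 i = 0 := by
        rcases mul_eq_zero.1 hz with h | h
        · exact absurd h (ne_of_gt hqbpos)
        · exact h
      simp only [ptQ, Function.update_self, hyi, mul_zero]
    · intro j hj
      have hz : w.2.1 T * w.1 j = 0 := by rw [← h8 j, h2 j hj]
      have hyj : w.1 j = 0 := by
        rcases mul_eq_zero.1 hz with h | h
        · exact absurd h (ne_of_gt hqpos)
        · exact h
      simp only [ptQ, Function.update_self, hyj, mul_zero]
    · intro j
      simp only [ptQ, Function.update_self]
      exact ⟨mul_nonneg hb0 (hy j).1, mul_le_of_le_one_right hb0 (hy j).2⟩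
    · intro j
      simp only [ptQ, Function.update_self]
      exact ⟨mul_nonneg (by linarith) (hy j).1,
        mul_le_of_le_one_right (by linarith) (hy j).2⟩
    · simp only [ptQ, Function.update_self]; ring
    · simp only [ptQ, Function.update_self]; exact hb0
    · simp only [ptQ, Function.update_self]; linarith
    · intro j; simp only [ptQ, Function.update_self]
    · intro j; simp only [ptQ, Function.update_self]
  · exact ⟨by simpa [ptQ, Function.update_of_ne h] using h1,
      by simpa [ptQ, Function.update_of_ne h] using h2,
      by simpa [ptQ, Function.update_of_ne h] using h3,
      by simpa [ptQ, Function.update_of_ne h] using h4,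
      by simpa [ptQ, Function.update_of_ne h] using h5,
      by simpa [ptQ, Function.update_of_ne h] using h6,
      by simpa [ptQ, Function.update_of_ne h] using h7,
      by simpa [ptQ, Function.update_of_ne h] using h8,
      by simpa [ptQ, Function.update_of_ne h] using h9⟩

lemma combQ {w : Pt n 𝒯} (hw : w ∈ STset G 𝒯) (T₀ : {T // T ∈ 𝒯}) :
    w.2.1 T₀ • ptQ w T₀ 1 + w.2.2.1 T₀ • ptQ w T₀ 0 = w := by
  obtain ⟨hy, hT⟩ := hw
  have hsum : w.2.1 T₀ + w.2.2.1 T₀ = 1 := (hT T₀).2.2.2.2.1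
  refine Prod.ext ?_ (Prod.ext ?_ (Prod.ext ?_ (Prod.ext ?_ ?_)))
  · funext i
    show w.2.1 T₀ * w.1 i + w.2.2.1 T₀ * w.1 i = w.1 i
    linear_combination w.1 i * hsum
  · funext T
    by_cases h : T = T₀
    · subst h
      show w.2.1 T * Function.update w.2.1 T 1 T +
          w.2.2.1 T * Function.update w.2.1 T 0 T = w.2.1 T
      rw [Function.update_self, Function.update_self]; ring
    · show w.2.1 T₀ * Function.update w.2.1 T₀ 1 T +
          w.2.2.1 T₀ * Function.update w.2.1 T₀ 0 T = w.2.1 T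
      rw [Function.update_of_ne h, Function.update_of_ne h]
      linear_combination w.2.1 T * hsum
  · funext T
    by_cases h : T = T₀
    · subst h
      show w.2.1 T * Function.update w.2.2.1 T (1 - 1) T +
          w.2.2.1 T * Function.update w.2.2.1 T (1 - 0) T = w.2.2.1 T
      rw [Function.update_self, Function.update_self]; ring
    · show w.2.1 T₀ * Function.update w.2.2.1 T₀ (1 - 1) T +
          w.2.2.1 T₀ * Function.update w.2.2.1 T₀ (1 - 0) T = w.2.2.1 T
      rw [Function.update_of_ne h, Function.update_of_ne h]
      linear_combination w.2.2.1 T * hsum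
  · funext T j
    by_cases h : T = T₀
    · subst h
      show w.2.1 T * Function.update w.2.2.2.1 T (fun j => 1 * w.1 j) T j +
          w.2.2.1 T * Function.update w.2.2.2.1 T (fun j => 0 * w.1 j) T j = w.2.2.2.1 T j
      rw [Function.update_self, Function.update_self, (hT T).2.2.2.2.2.2.2.1 j]
      ring
    · show w.2.1 T₀ * Function.update w.2.2.2.1 T₀ (fun j => 1 * w.1 j) T j +
          w.2.2.1 T₀ * Function.update w.2.2.2.1 T₀ (fun j => 0 * w.1 j) T j = w.2.2.2.1 T j
      rw [Function.update_of_ne h, Function.update_of_ne h]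
      linear_combination w.2.2.2.1 T j * hsum
  · funext T j
    by_cases h : T = T₀
    · subst h
      show w.2.1 T * Function.update w.2.2.2.2 T (fun j => (1 - 1) * w.1 j) T j +
          w.2.2.1 T * Function.update w.2.2.2.2 T (fun j => (1 - 0) * w.1 j) T j
          = w.2.2.2.2 T j
      rw [Function.update_self, Function.update_self, (hT T).2.2.2.2.2.2.2.2 j]
      ring
    · show w.2.1 T₀ * Function.update w.2.2.2.2 T₀ (fun j => (1 - 1) * w.1 j) T j +
          w.2.2.1 T₀ * Function.update w.2.2.2.2 T₀ (fun j => (1 - 0) * w.1 j) T j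
          = w.2.2.2.2 T j
      rw [Function.update_of_ne h, Function.update_of_ne h]
      linear_combination w.2.2.2.2 T j * hsum

/-- All coordinates of `w` are `0` or `1`. -/
def All01 (w : Pt n 𝒯) : Prop :=
  (∀ i, w.1 i = 0 ∨ w.1 i = 1) ∧
  (∀ T, w.2.1 T = 0 ∨ w.2.1 T = 1) ∧
  (∀ T, w.2.2.1 T = 0 ∨ w.2.2.1 T = 1) ∧
  (∀ T j, w.2.2.2.1 T j = 0 ∨ w.2.2.2.1 T j = 1) ∧
  (∀ T j, w.2.2.2.2 T j = 0 ∨ w.2.2.2.2 T j = 1)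

lemma all01_of_yq {w : Pt n 𝒯} (hw : w ∈ STset G 𝒯)
    (hy : ∀ i, w.1 i = 0 ∨ w.1 i = 1) (hq : ∀ T, w.2.1 T = 0 ∨ w.2.1 T = 1) :
    All01 w := by
  obtain ⟨hyb, hT⟩ := hw
  have hqb : ∀ T, w.2.2.1 T = 0 ∨ w.2.2.1 T = 1 := by
    intro T
    have := (hT T).2.2.2.2.1
    rcases hq T with h | h
    · right; linarith
    · left; linarith
  refine ⟨hy, hq, hqb, ?_, ?_⟩
  · intro T j
    rw [(hT T).2.2.2.2.2.2.2.1 j]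
    rcases hq T with h | h <;> rcases hy j with h' | h' <;> simp [h, h']
  · intro T j
    rw [(hT T).2.2.2.2.2.2.2.2 j]
    rcases hqb T with h | h <;> rcases hy j with h' | h' <;> simp [h, h']

/-- Number of fractional coordinates among `y` and `q`. -/
noncomputable def fracCount (w : Pt n 𝒯) : ℕ :=
  (Finset.univ.filter fun i => ¬(w.1 i = 0 ∨ w.1 i = 1)).card +
  (Finset.univ.filter fun T : {T // T ∈ 𝒯} => ¬(w.2.1 T = 0 ∨ w.2.1 T = 1)).card

lemma countY {w : Pt n 𝒯} (ℓ : Fin n) (hℓ : ¬(w.1 ℓ = 0 ∨ w.1 ℓ = 1))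
    {b : ℝ} (hb : b = 0 ∨ b = 1) : fracCount (ptY w ℓ b) < fracCount w := by
  have h2 : (ptY w ℓ b).2.1 = w.2.1 := rfl
  have hss : (Finset.univ.filter fun i => ¬((ptY w ℓ b).1 i = 0 ∨ (ptY w ℓ b).1 i = 1)) ⊂
      (Finset.univ.filter fun i => ¬(w.1 i = 0 ∨ w.1 i = 1)) := by
    constructor
    · intro i hi
      simp only [Finset.mem_filter, Finset.mem_univ, true_and] at hi ⊢
      by_cases h : i = ℓ
      · subst h
        exact absurd (by simpa only [ptY, Function.update_self] using hb) hi
      · simpa only [ptY, Function.update_of_ne h] using hi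
    · intro hsub
      have hmem : ℓ ∈ (Finset.univ.filter fun i =>
          ¬((ptY w ℓ b).1 i = 0 ∨ (ptY w ℓ b).1 i = 1)) :=
        hsub (by simp only [Finset.mem_filter, Finset.mem_univ, true_and]; exact hℓ)
      simp only [Finset.mem_filter, Finset.mem_univ, true_and] at hmem
      exact hmem (by simpa only [ptY, Function.update_self] using hb)
  unfold fracCount
  rw [h2]
  exact Nat.add_lt_add_right (Finset.card_lt_card hss) _

lemma countQ {w : Pt n 𝒯} (T₀ : {T // T ∈ 𝒯}) (hT₀ : ¬(w.2.1 T₀ = 0 ∨ w.2.1 T₀ = 1))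
    {b : ℝ} (hb : b = 0 ∨ b = 1) : fracCount (ptQ w T₀ b) < fracCount w := by
  have h1 : (ptQ w T₀ b).1 = w.1 := rfl
  have hss : (Finset.univ.filter fun T : {T // T ∈ 𝒯} =>
        ¬((ptQ w T₀ b).2.1 T = 0 ∨ (ptQ w T₀ b).2.1 T = 1)) ⊂
      (Finset.univ.filter fun T => ¬(w.2.1 T = 0 ∨ w.2.1 T = 1)) := by
    constructor
    · intro T hT
      simp only [Finset.mem_filter, Finset.mem_univ, true_and] at hT ⊢
      by_cases h : T = T₀
      · subst h
        exact absurd (by simpa only [ptQ, Function.update_self] using hb) hT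
      · simpa only [ptQ, Function.update_of_ne h] using hT
    · intro hsub
      have hmem : T₀ ∈ (Finset.univ.filter fun T : {T // T ∈ 𝒯} =>
          ¬((ptQ w T₀ b).2.1 T = 0 ∨ (ptQ w T₀ b).2.1 T = 1)) :=
        hsub (by simp only [Finset.mem_filter, Finset.mem_univ, true_and]; exact hT₀)
      simp only [Finset.mem_filter, Finset.mem_univ, true_and] at hmem
      exact hmem (by simpa only [ptQ, Function.update_self] using hb)
  unfold fracCount
  rw [h1]
  exact Nat.add_lt_add_left (Finset.card_lt_card hss) _

lemma frac_bounds_y {w : Pt n 𝒯} (hw : w ∈ STset G 𝒯) {ℓ : Fin n}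
    (hℓ : ¬(w.1 ℓ = 0 ∨ w.1 ℓ = 1)) : 0 < w.1 ℓ ∧ w.1 ℓ < 1 := by
  push_neg at hℓ
  exact ⟨lt_of_le_of_ne (hw.1 ℓ).1 (Ne.symm hℓ.1), lt_of_le_of_ne (hw.1 ℓ).2 hℓ.2⟩

lemma frac_bounds_q {w : Pt n 𝒯} (hw : w ∈ STset G 𝒯) {T₀ : {T // T ∈ 𝒯}}
    (hT₀ : ¬(w.2.1 T₀ = 0 ∨ w.2.1 T₀ = 1)) : 0 < w.2.1 T₀ ∧ 0 < w.2.2.1 T₀ := by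
  push_neg at hT₀
  have h1 : w.2.1 T₀ + w.2.2.1 T₀ = 1 := (hw.2 T₀).2.2.2.2.1
  have h2 : 0 ≤ w.2.1 T₀ := (hw.2 T₀).2.2.2.2.2.1
  have h3 : 0 ≤ w.2.2.1 T₀ := (hw.2 T₀).2.2.2.2.2.2.1
  refine ⟨lt_of_le_of_ne h2 (Ne.symm hT₀.1), ?_⟩
  rcases lt_or_eq_of_le h3 with h | h
  · exact h
  · exact absurd (by linarith) hT₀.2

lemma mem_hull (G : SimpleGraph (Fin n)) (𝒯 : Finset (Finset (Fin n))) :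
    ∀ N : ℕ, ∀ w ∈ STset G 𝒯, fracCount w ≤ N →
      w ∈ convexHull ℝ {w ∈ STset G 𝒯 | All01 w} := by
  intro N
  induction N with
  | zero =>
    intro w hw hc
    refine subset_convexHull ℝ _ ⟨hw, all01_of_yq hw ?_ ?_⟩
    · intro i
      by_contra h
      have hne : (Finset.univ.filter fun i => ¬(w.1 i = 0 ∨ w.1 i = 1)).Nonempty :=
        ⟨i, by simpa using h⟩
      have := Finset.card_pos.2 hne
      unfold fracCount at hc; omega
    · intro T
      by_contra h
      have hne : (Finset.univ.filter fun T : {T // T ∈ 𝒯} =>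
          ¬(w.2.1 T = 0 ∨ w.2.1 T = 1)).Nonempty := ⟨T, by simpa using h⟩
      have := Finset.card_pos.2 hne
      unfold fracCount at hc; omega
  | succ N ih =>
    intro w hw hc
    by_cases hy01 : ∀ i, w.1 i = 0 ∨ w.1 i = 1
    · by_cases hq01 : ∀ T, w.2.1 T = 0 ∨ w.2.1 T = 1
      · exact subset_convexHull ℝ _ ⟨hw, all01_of_yq hw hy01 hq01⟩
      · push_neg at hq01
        obtain ⟨T₀, hT₀⟩ := hq01
        have hT₀' : ¬(w.2.1 T₀ = 0 ∨ w.2.1 T₀ = 1) := by tauto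
        obtain ⟨hq, hqb⟩ := frac_bounds_q hw hT₀'
        have hp1 : ptQ w T₀ 1 ∈ STset G 𝒯 := memQ hw T₀ hq hqb zero_le_one le_rfl
        have hp0 : ptQ w T₀ 0 ∈ STset G 𝒯 := memQ hw T₀ hq hqb le_rfl zero_le_one
        have hc1 : fracCount (ptQ w T₀ 1) ≤ N := by
          have := countQ T₀ hT₀' (Or.inr rfl); omega
        have hc0 : fracCount (ptQ w T₀ 0) ≤ N := by
          have := countQ T₀ hT₀' (Or.inl rfl); omega
        have hcomb := (convex_convexHull ℝ {w ∈ STset G 𝒯 | All01 w})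
          (ih _ hp1 hc1) (ih _ hp0 hc0) hq.le hqb.le (hw.2 T₀).2.2.2.2.1
        rwa [combQ hw T₀] at hcomb
    · push_neg at hy01
      obtain ⟨ℓ, hℓ⟩ := hy01
      have hℓ' : ¬(w.1 ℓ = 0 ∨ w.1 ℓ = 1) := by tauto
      obtain ⟨h0, h1⟩ := frac_bounds_y hw hℓ'
      have hp1 : ptY w ℓ 1 ∈ STset G 𝒯 := memY hw ℓ h0 zero_le_one le_rfl
      have hp0 : ptY w ℓ 0 ∈ STset G 𝒯 := memY hw ℓ h0 le_rfl zero_le_one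
      have hc1 : fracCount (ptY w ℓ 1) ≤ N := by
        have := countY ℓ hℓ' (Or.inr rfl); omega
      have hc0 : fracCount (ptY w ℓ 0) ≤ N := by
        have := countY ℓ hℓ' (Or.inl rfl); omega
      have hcomb := (convex_convexHull ℝ {w ∈ STset G 𝒯 | All01 w})
        (ih _ hp1 hc1) (ih _ hp0 hc0) h0.le (by linarith : (0:ℝ) ≤ 1 - w.1 ℓ)
        (by ring : w.1 ℓ + (1 - w.1 ℓ) = 1)
      rwa [combY hw ℓ] at hcomb

lemma extreme01 {w : Pt n 𝒯} (hw : w ∈ Set.extremePoints ℝ (STset G 𝒯)) :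
    All01 w := by
  obtain ⟨hmem, hext⟩ := hw
  have hy01 : ∀ i, w.1 i = 0 ∨ w.1 i = 1 := by
    intro i
    by_contra hℓ
    obtain ⟨h0, h1⟩ := frac_bounds_y hmem hℓ
    have hp1 : ptY w i 1 ∈ STset G 𝒯 := memY hmem i h0 zero_le_one le_rfl
    have hp0 : ptY w i 0 ∈ STset G 𝒯 := memY hmem i h0 le_rfl zero_le_one
    have hseg : w ∈ openSegment ℝ (ptY w i 1) (ptY w i 0) :=
      ⟨w.1 i, 1 - w.1 i, h0, by linarith, by ring, combY hmem i⟩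
    have heq := hext hp1 hp0 hseg
    have hval : (ptY w i 1).1 i = w.1 i := by rw [heq]
    simp only [ptY, Function.update_self] at hval
    linarith [hval]
  have hq01 : ∀ T, w.2.1 T = 0 ∨ w.2.1 T = 1 := by
    intro T
    by_contra hT
    obtain ⟨hq, hqb⟩ := frac_bounds_q hmem hT
    have hp1 : ptQ w T 1 ∈ STset G 𝒯 := memQ hmem T hq hqb zero_le_one le_rfl
    have hp0 : ptQ w T 0 ∈ STset G 𝒯 := memQ hmem T hq hqb le_rfl zero_le_one
    have hseg : w ∈ openSegment ℝ (ptQ w T 1) (ptQ w T 0) :=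
      ⟨w.2.1 T, w.2.2.1 T, hq, hqb, (hmem.2 T).2.2.2.2.1, combQ hmem T⟩
    have heq := hext hp1 hp0 hseg
    have hval : (ptQ w T 1).2.1 T = w.2.1 T := by rw [heq]
    simp only [ptQ, Function.update_self] at hval
    exact hT (Or.inr hval.symm)
  exact all01_of_yq hmem hy01 hq01

lemma finite01 : ({w : Pt n 𝒯 | All01 w}).Finite := by
  have h01 : ({0, 1} : Set ℝ).Finite := (Set.finite_singleton 1).insert 0
  have hbig : ((Set.univ.pi fun _ : Fin n => ({0, 1} : Set ℝ)) ×ˢ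
      ((Set.univ.pi fun _ : {T // T ∈ 𝒯} => ({0, 1} : Set ℝ)) ×ˢ
      ((Set.univ.pi fun _ : {T // T ∈ 𝒯} => ({0, 1} : Set ℝ)) ×ˢ
      ((Set.univ.pi fun _ : {T // T ∈ 𝒯} => Set.univ.pi fun _ : Fin n => ({0, 1} : Set ℝ)) ×ˢ
      (Set.univ.pi fun _ : {T // T ∈ 𝒯} =>
        Set.univ.pi fun _ : Fin n => ({0, 1} : Set ℝ)))))).Finite := by
    refine Set.Finite.prod (Set.Finite.pi fun _ => h01) ?_
    refine Set.Finite.prod (Set.Finite.pi fun _ => h01) ?_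
    refine Set.Finite.prod (Set.Finite.pi fun _ => h01) ?_
    exact Set.Finite.prod (Set.Finite.pi fun _ => Set.Finite.pi fun _ => h01)
      (Set.Finite.pi fun _ => Set.Finite.pi fun _ => h01)
  refine hbig.subset ?_
  rintro w ⟨hy, hq, hqb, hv, hvb⟩
  refine ⟨?_, ?_, ?_, ?_, ?_⟩ <;>
    simp only [Set.mem_pi, Set.mem_univ, true_implies, Set.mem_insert_iff,
      Set.mem_singleton_iff]
  · exact hy
  · exact hq
  · exact hqb
  · exact fun T j => hv T j
  · exact fun T j => hvb T j

end StmtAux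

/-- Proposition 4: every extreme point of `𝒮_𝒯` has all coordinates in `{0,1}`;
in particular `conv(𝒮_𝒯)` is a polytope. -/
theorem stmt_10 {n : ℕ} (G : SimpleGraph (Fin n)) (𝒯 : Finset (Finset (Fin n)))
    (hdisj : ∀ T₁ ∈ 𝒯, ∀ T₂ ∈ 𝒯, T₁ ≠ T₂ → ∀ i, i ∈ T₁ → i ∉ T₂)
    (hcover : ∀ i j : Fin n, G.Adj i j → (∃ T ∈ 𝒯, i ∈ T) ∨ (∃ T ∈ 𝒯, j ∈ T))
    (hfeas : ∀ T ∈ 𝒯, ∀ i ∈ T, ∀ j : Fin n, G.Adj i j ↔ ∃ i' ∈ T, G.Adj i' j) :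
    (∀ w ∈ Set.extremePoints ℝ (STset G 𝒯),
      (∀ i, w.1 i = 0 ∨ w.1 i = 1) ∧
      (∀ T, w.2.1 T = 0 ∨ w.2.1 T = 1) ∧
      (∀ T, w.2.2.1 T = 0 ∨ w.2.2.1 T = 1) ∧
      (∀ T j, w.2.2.2.1 T j = 0 ∨ w.2.2.2.1 T j = 1) ∧
      (∀ T j, w.2.2.2.2 T j = 0 ∨ w.2.2.2.2 T j = 1)) ∧
    ∃ F : Set (Pt n 𝒯), F.Finite ∧ convexHull ℝ (STset G 𝒯) = convexHull ℝ F := by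
  constructor
  · intro w hw
    exact StmtAux.extreme01 hw
  · refine ⟨{w ∈ STset G 𝒯 | StmtAux.All01 w}, ?_, ?_⟩
    · exact StmtAux.finite01.subset (fun w hw => hw.2)
    · refine le_antisymm ?_ (convexHull_mono (Set.sep_subset _ _))
      exact convexHull_min
        (fun w hw => StmtAux.mem_hull G 𝒯 (StmtAux.fracCount w) w hw le_rfl)
        (convex_convexHull ℝ _)
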